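/- Let 𝒵(n, 𝔽_q) be the subspace of 𝒜(n, 𝔽_q) consisting of elements invariant under the two-sided action of GL(n, 𝔽_q). Then 𝒵(n, 𝔽_q) is closed under the product * of 𝒜(n, 𝔽_q), and it is commutative: x * y = y * x for all x, y ∈ 𝒵(n, 𝔽_q). -/

import Mathlib

/-- A partial isomorphism of `F^n`: a pair of linear isomorphisms
between two subspaces of the same dimension. -/
structure PartialIso (F : Type*) [Field F] (n : ℕ) where
  V : Submodule F (Fin n → F)
  W : Submodule F (Fin n → F)
  g₁ : V ≃ₗ[F] W
  g₂ : W ≃ₗ[F] V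

variable {F : Type*} [Field F] {n : ℕ}

/-- `Q` is an extension of the partial isomorphism `P`. -/
def PartialIso.Extends (Q P : PartialIso F n) : Prop :=
  ∃ (hV : P.V ≤ Q.V) (hW : P.W ≤ Q.W),
    (∀ v : P.V, (Q.g₁ ⟨v.1, hV v.2⟩ : Fin n → F) = (P.g₁ v : Fin n → F)) ∧
    (∀ w : P.W, (Q.g₂ ⟨w.1, hW w.2⟩ : Fin n → F) = (P.g₂ w : Fin n → F))

/-- `Q` is a trivial extension of `P`: the quotient isomorphisms
`Q.V/P.V → Q.W/P.W` and `Q.W/P.W → Q.V/P.V` induced by `Q.g₁` and `Q.g₂` are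
mutually inverse; this is written out as the two coset conditions below. -/
def PartialIso.IsTrivialExt (P Q : PartialIso F n) : Prop :=
  Q.Extends P ∧
  (∀ v : Q.V, ((Q.g₂ (Q.g₁ v) : Fin n → F) - (v : Fin n → F)) ∈ P.V) ∧
  (∀ w : Q.W, ((Q.g₁ (Q.g₂ w) : Fin n → F) - (w : Fin n → F)) ∈ P.W)

/-- The dimension of the space of fixed vectors of the composite automorphism `g₂ ∘ g₁` of `V`. -/
noncomputable def PartialIso.fixDim (P : PartialIso F n) : ℕ :=
  Module.finrank F
    (LinearMap.ker ((P.g₁.trans P.g₂).toLinearMap - (LinearMap.id : P.V →ₗ[F] P.V)))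

open scoped Classical

/-- The complex vector space with basis the set of partial isomorphisms of `F^n`. -/
abbrev PIAlg (F : Type*) [Field F] (n : ℕ) := PartialIso F n →₀ ℂ

/-- `R_W^{W⁺}(P)`: the uniform average of the trivial extensions of `P` whose right
subspace equals `Wp` (left subspace arbitrary). -/
noncomputable def avgR (P : PartialIso F n) (Wp : Submodule F (Fin n → F)) : PIAlg F n :=
  (Nat.card {Q : PartialIso F n // P.IsTrivialExt Q ∧ Q.W = Wp} : ℂ)⁻¹ •
    ∑ᶠ (Q : PartialIso F n) (_ : P.IsTrivialExt Q ∧ Q.W = Wp), Finsupp.single Q (1 : ℂ)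

/-- `L_V^{V⁺}(P)`: the uniform average of the trivial extensions of `P` whose left
subspace equals `Vp` (right subspace arbitrary). -/
noncomputable def avgL (P : PartialIso F n) (Vp : Submodule F (Fin n → F)) : PIAlg F n :=
  (Nat.card {Q : PartialIso F n // P.IsTrivialExt Q ∧ Q.V = Vp} : ℂ)⁻¹ •
    ∑ᶠ (Q : PartialIso F n) (_ : P.IsTrivialExt Q ∧ Q.V = Vp), Finsupp.single Q (1 : ℂ)

/-- Composition of two partial isomorphisms whose middle subspaces agree:
`(U,V,g₁,g₂)` and `(V,X,h₁,h₂)` compose to `(U,X,h₁∘g₁,g₂∘h₂)`. -/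
def PartialIso.compo (A B : PartialIso F n) (h : A.W = B.V) : PartialIso F n where
  V := A.V
  W := B.W
  g₁ := (A.g₁.trans (LinearEquiv.ofEq _ _ h)).trans B.g₁
  g₂ := (B.g₂.trans (LinearEquiv.ofEq _ _ h.symm)).trans A.g₂

/-- The pairing of two partial isomorphisms: their composition when the middle
subspaces agree, `0` otherwise. -/
noncomputable def pairTerm (A B : PartialIso F n) : PIAlg F n :=
  if h : A.W = B.V then Finsupp.single (A.compo B h) (1 : ℂ) else 0

/-- The product of two basis elements of `𝒜(n,F)`: the bilinear pairing of
`R_V^{V+W}(P)` with `L_W^{V+W}(Q)`. -/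
noncomputable def mulBasis (P Q : PartialIso F n) : PIAlg F n :=
  (avgR P (P.W ⊔ Q.V)).sum fun A cA =>
    (avgL Q (P.W ⊔ Q.V)).sum fun B cB => (cA * cB) • pairTerm A B

/-- The product of the algebra `𝒜(n,F)` of partial isomorphisms. -/
noncomputable def piMul (x y : PIAlg F n) : PIAlg F n :=
  x.sum fun P cP => y.sum fun Q cQ => (cP * cQ) • mulBasis P Q

/-- The empty partial isomorphism `({0},{0},id,id)`. -/
def PartialIso.unit (F : Type*) [Field F] (n : ℕ) : PartialIso F n :=
  ⟨⊥, ⊥, LinearEquiv.refl F _, LinearEquiv.refl F _⟩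

lemma map_comap_equiv (e : (Fin n → F) ≃ₗ[F] (Fin n → F)) (p : Submodule F (Fin n → F)) :
    (p.comap (e : (Fin n → F) →ₗ[F] (Fin n → F))).map (e : (Fin n → F) →ₗ[F] (Fin n → F)) = p :=
  Submodule.map_comap_eq_of_surjective e.surjective p

/-- The two-sided action of `GL(n, F)` (realized as linear automorphisms of `F^n`) on partial
isomorphisms: `k · (V,W,g₁,g₂) · l = (k⁻¹(V), l⁻¹(W), l⁻¹∘g₁∘k, k⁻¹∘g₂∘l)`. -/
noncomputable def PartialIso.act (k l : (Fin n → F) ≃ₗ[F] (Fin n → F)) (P : PartialIso F n) :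
    PartialIso F n where
  V := P.V.comap (k : (Fin n → F) →ₗ[F] (Fin n → F))
  W := P.W.comap (l : (Fin n → F) →ₗ[F] (Fin n → F))
  g₁ := (((k.submoduleMap (P.V.comap (k : (Fin n → F) →ₗ[F] (Fin n → F)))).trans
          (LinearEquiv.ofEq _ _ (map_comap_equiv k P.V))).trans P.g₁).trans
        (((l.submoduleMap (P.W.comap (l : (Fin n → F) →ₗ[F] (Fin n → F)))).trans
          (LinearEquiv.ofEq _ _ (map_comap_equiv l P.W))).symm)
  g₂ := (((l.submoduleMap (P.W.comap (l : (Fin n → F) →ₗ[F] (Fin n → F)))).trans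
          (LinearEquiv.ofEq _ _ (map_comap_equiv l P.W))).trans P.g₂).trans
        (((k.submoduleMap (P.V.comap (k : (Fin n → F) →ₗ[F] (Fin n → F)))).trans
          (LinearEquiv.ofEq _ _ (map_comap_equiv k P.V))).symm)

/-- The two-sided action of `GL(n,F)` on `𝒜(n,F)`, extended linearly. -/
noncomputable def actA (k l : (Fin n → F) ≃ₗ[F] (Fin n → F)) (x : PIAlg F n) : PIAlg F n :=
  Finsupp.mapDomain (PartialIso.act k l) x

/-- The set `𝒵(n,F)` of elements of `𝒜(n,F)` invariant under the two-sided
`GL(n,F)`-action. -/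
def Zset (F : Type*) [Field F] (n : ℕ) : Set (PIAlg F n) :=
  {x | ∀ k l : (Fin n → F) ≃ₗ[F] (Fin n → F), actA k l x = x}


/-! ### Auxiliary development -/

section Aux

variable {F : Type*} [Field F] {n : ℕ}

namespace PartialIso

lemma ext' {P Q : PartialIso F n} (hV : P.V = Q.V) (hW : P.W = Q.W)
    (h1 : ∀ v : P.V, (P.g₁ v : Fin n → F) = (Q.g₁ ⟨v.1, hV ▸ v.2⟩ : Fin n → F))
    (h2 : ∀ w : P.W, (P.g₂ w : Fin n → F) = (Q.g₂ ⟨w.1, hW ▸ w.2⟩ : Fin n → F)) :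
    P = Q := by
  obtain ⟨V, W, g₁, g₂⟩ := P
  obtain ⟨V', W', g₁', g₂'⟩ := Q
  dsimp at hV hW h1 h2
  subst hV; subst hW
  congr 1
  · exact LinearEquiv.ext fun v => Subtype.ext (h1 v)
  · exact LinearEquiv.ext fun w => Subtype.ext (h2 w)

/-- Helper: congruence through a linear equivalence of submodules. -/
lemma congr_coe {V W : Submodule F (Fin n → F)} (g : V ≃ₗ[F] W) {x y : V}
    (h : (x : Fin n → F) = (y : Fin n → F)) : (g x : Fin n → F) = (g y : Fin n → F) := by
  rw [show x = y from Subtype.ext h]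

@[simp] lemma act_V (k l : (Fin n → F) ≃ₗ[F] (Fin n → F)) (P : PartialIso F n) :
    (P.act k l).V = P.V.comap (k : (Fin n → F) →ₗ[F] (Fin n → F)) := rfl

@[simp] lemma act_W (k l : (Fin n → F) ≃ₗ[F] (Fin n → F)) (P : PartialIso F n) :
    (P.act k l).W = P.W.comap (l : (Fin n → F) →ₗ[F] (Fin n → F)) := rfl

lemma act_g₁ (k l : (Fin n → F) ≃ₗ[F] (Fin n → F)) (P : PartialIso F n)
    (v : (P.act k l).V) :
    ((P.act k l).g₁ v : Fin n → F) = l.symm (P.g₁ ⟨k v.1, v.2⟩) := by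
  simp [PartialIso.act]
  rfl

lemma act_g₂ (k l : (Fin n → F) ≃ₗ[F] (Fin n → F)) (P : PartialIso F n)
    (w : (P.act k l).W) :
    ((P.act k l).g₂ w : Fin n → F) = k.symm (P.g₂ ⟨l w.1, w.2⟩) := by
  simp [PartialIso.act]
  rfl

lemma act_act (k' l' k l : (Fin n → F) ≃ₗ[F] (Fin n → F)) (P : PartialIso F n) :
    (P.act k l).act k' l' = P.act (k'.trans k) (l'.trans l) := by
  refine ext' ?_ ?_ ?_ ?_
  · ext x; simp [Submodule.mem_comap]
  · ext x; simp [Submodule.mem_comap]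
  · intro v
    rw [act_g₁, act_g₁, act_g₁]
    rfl
  · intro w
    rw [act_g₂, act_g₂, act_g₂]
    rfl

lemma act_refl (P : PartialIso F n) :
    P.act (LinearEquiv.refl F (Fin n → F)) (LinearEquiv.refl F (Fin n → F)) = P := by
  refine ext' ?_ ?_ ?_ ?_
  · simp
  · simp
  · intro v
    rw [act_g₁]
    rfl
  · intro w
    rw [act_g₂]
    rfl

lemma act_leftInv (k l : (Fin n → F) ≃ₗ[F] (Fin n → F)) (P : PartialIso F n) :
    (P.act k l).act k.symm l.symm = P := by
  rw [act_act, LinearEquiv.symm_trans_self, LinearEquiv.symm_trans_self, act_refl]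

lemma act_rightInv (k l : (Fin n → F) ≃ₗ[F] (Fin n → F)) (P : PartialIso F n) :
    (P.act k.symm l.symm).act k l = P := by
  rw [act_act, LinearEquiv.self_trans_symm, LinearEquiv.self_trans_symm, act_refl]

lemma act_injective (k l : (Fin n → F) ≃ₗ[F] (Fin n → F)) :
    Function.Injective (PartialIso.act k l (F := F) (n := n)) := by
  intro P Q h
  have := congrArg (PartialIso.act k.symm l.symm) h
  rwa [act_leftInv, act_leftInv] at this

/-- The swap (anti-automorphism) of a partial isomorphism. -/
def swap (P : PartialIso F n) : PartialIso F n := ⟨P.W, P.V, P.g₂, P.g₁⟩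

@[simp] lemma swap_V (P : PartialIso F n) : P.swap.V = P.W := rfl
@[simp] lemma swap_W (P : PartialIso F n) : P.swap.W = P.V := rfl
@[simp] lemma swap_swap (P : PartialIso F n) : P.swap.swap = P := rfl

lemma swap_injective : Function.Injective (PartialIso.swap (F := F) (n := n)) :=
  Function.LeftInverse.injective swap_swap

lemma isTrivialExt_swap {P Q : PartialIso F n} (h : P.IsTrivialExt Q) :
    P.swap.IsTrivialExt Q.swap := by
  obtain ⟨⟨hV, hW, h1, h2⟩, hc1, hc2⟩ := h
  exact ⟨⟨hW, hV, h2, h1⟩, hc2, hc1⟩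

lemma isTrivialExt_act (k l : (Fin n → F) ≃ₗ[F] (Fin n → F)) {P Q : PartialIso F n}
    (h : P.IsTrivialExt Q) : (P.act k l).IsTrivialExt (Q.act k l) := by
  obtain ⟨⟨hV, hW, h1, h2⟩, hc1, hc2⟩ := h
  refine ⟨⟨fun x hx => hV hx, fun x hx => hW hx, ?_, ?_⟩, ?_, ?_⟩
  · intro v
    rw [act_g₁, act_g₁]
    exact congrArg l.symm (h1 ⟨k v.1, v.2⟩)
  · intro w
    rw [act_g₂, act_g₂]
    exact congrArg k.symm (h2 ⟨l w.1, w.2⟩)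
  · intro v
    have hmem : l.symm ((Q.g₁ ⟨k v.1, v.2⟩ : Fin n → F)) ∈ (Q.act k l).W := by
      have := ((Q.act k l).g₁ v).2
      rwa [show ((Q.act k l).g₁ v : Fin n → F) = l.symm (Q.g₁ ⟨k v.1, v.2⟩) from act_g₁ k l Q v]
        at this
    show ((Q.act k l).g₂ ((Q.act k l).g₁ v) : Fin n → F) - v.1 ∈ P.V.comap (k : _ →ₗ[F] _)
    have key : ((Q.act k l).g₂ ((Q.act k l).g₁ v) : Fin n → F)
        = k.symm ((Q.g₂ (Q.g₁ ⟨k v.1, v.2⟩) : Fin n → F)) := by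
      rw [act_g₂]
      refine congrArg k.symm (congr_coe Q.g₂ ?_)
      show l (((Q.act k l).g₁ v : Fin n → F)) = _
      rw [act_g₁, LinearEquiv.apply_symm_apply]
    rw [key]
    show k (k.symm ((Q.g₂ (Q.g₁ ⟨k v.1, v.2⟩) : Fin n → F)) - v.1) ∈ P.V
    rw [map_sub, LinearEquiv.apply_symm_apply]
    exact hc1 ⟨k v.1, v.2⟩
  · intro w
    show ((Q.act k l).g₁ ((Q.act k l).g₂ w) : Fin n → F) - w.1 ∈ P.W.comap (l : _ →ₗ[F] _)
    have key : ((Q.act k l).g₁ ((Q.act k l).g₂ w) : Fin n → F)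
        = l.symm ((Q.g₁ (Q.g₂ ⟨l w.1, w.2⟩) : Fin n → F)) := by
      rw [act_g₁]
      refine congrArg l.symm (congr_coe Q.g₁ ?_)
      show k (((Q.act k l).g₂ w : Fin n → F)) = _
      rw [act_g₂, LinearEquiv.apply_symm_apply]
    rw [key]
    show l (l.symm ((Q.g₁ (Q.g₂ ⟨l w.1, w.2⟩) : Fin n → F)) - w.1) ∈ P.W
    rw [map_sub, LinearEquiv.apply_symm_apply]
    exact hc2 ⟨l w.1, w.2⟩

lemma comap_comap_symm (l : (Fin n → F) ≃ₗ[F] (Fin n → F)) (p : Submodule F (Fin n → F)) :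
    (p.comap (l : (Fin n → F) →ₗ[F] (Fin n → F))).comap
      (l.symm : (Fin n → F) →ₗ[F] (Fin n → F)) = p := by
  ext x; simp

lemma comap_sup_equiv (m : (Fin n → F) ≃ₗ[F] (Fin n → F)) (p q : Submodule F (Fin n → F)) :
    (p ⊔ q).comap (m : (Fin n → F) →ₗ[F] (Fin n → F))
      = p.comap (m : (Fin n → F) →ₗ[F] (Fin n → F)) ⊔ q.comap (m : (Fin n → F) →ₗ[F] (Fin n → F)) := by
  rw [Submodule.comap_equiv_eq_map_symm, Submodule.comap_equiv_eq_map_symm,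
    Submodule.comap_equiv_eq_map_symm, Submodule.map_sup]

lemma comap_middle_iff (m : (Fin n → F) ≃ₗ[F] (Fin n → F)) {A B : PartialIso F n} :
    A.W.comap (m : (Fin n → F) →ₗ[F] (Fin n → F))
      = B.V.comap (m : (Fin n → F) →ₗ[F] (Fin n → F)) ↔ A.W = B.V := by
  constructor
  · intro h
    have := congrArg (Submodule.comap (m.symm : (Fin n → F) →ₗ[F] (Fin n → F))) h
    rwa [comap_comap_symm, comap_comap_symm] at this
  · intro h; rw [h]

lemma compo_g₁ (A B : PartialIso F n) (h : A.W = B.V) (v : (A.compo B h).V)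
    (hm : (A.g₁ v : Fin n → F) ∈ B.V) :
    ((A.compo B h).g₁ v : Fin n → F) = (B.g₁ ⟨(A.g₁ v : Fin n → F), hm⟩ : Fin n → F) :=
  rfl

lemma compo_g₂ (A B : PartialIso F n) (h : A.W = B.V) (w : (A.compo B h).W)
    (hm : (B.g₂ w : Fin n → F) ∈ A.W) :
    ((A.compo B h).g₂ w : Fin n → F)
      = (A.g₂ ⟨(B.g₂ w : Fin n → F), hm⟩ : Fin n → F) :=
  rfl

lemma act_compo (k m l : (Fin n → F) ≃ₗ[F] (Fin n → F)) (A B : PartialIso F n)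
    (h : A.W = B.V) (h' : (A.act k m).W = (B.act m l).V) :
    (A.compo B h).act k l = (A.act k m).compo (B.act m l) h' := by
  have hmk : ∀ v : ((A.compo B h).act k l).V, (A.g₁ ⟨k v.1, v.2⟩ : Fin n → F) ∈ B.V :=
    fun v => h ▸ (A.g₁ ⟨k v.1, v.2⟩).2
  have hmk2 : ∀ w : ((A.compo B h).act k l).W, (B.g₂ ⟨l w.1, w.2⟩ : Fin n → F) ∈ A.W :=
    fun w => h.symm ▸ (B.g₂ ⟨l w.1, w.2⟩).2
  refine ext' rfl rfl ?_ ?_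
  · intro v
    rw [act_g₁]
    refine (congrArg l.symm (compo_g₁ A B h _ (hmk v))).trans ?_
    rw [compo_g₁ (A.act k m) (B.act m l) h' _ (h' ▸ ((A.act k m).g₁ ⟨v.1, v.2⟩).2), act_g₁]
    refine congrArg l.symm (congr_coe B.g₁ ?_)
    dsimp only
    exact ((congrArg m (act_g₁ k m A ⟨v.1, v.2⟩)).trans (LinearEquiv.apply_symm_apply m _)).symm
  · intro w
    rw [act_g₂]
    refine (congrArg k.symm (compo_g₂ A B h _ (hmk2 w))).trans ?_
    rw [compo_g₂ (A.act k m) (B.act m l) h' _ (h'.symm ▸ ((B.act m l).g₂ ⟨w.1, w.2⟩).2), act_g₂]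
    refine congrArg k.symm (congr_coe A.g₂ ?_)
    dsimp only
    exact ((congrArg m (act_g₂ m l B ⟨w.1, w.2⟩)).trans (LinearEquiv.apply_symm_apply m _)).symm

lemma swap_compo (A B : PartialIso F n) (h : A.W = B.V) :
    (A.compo B h).swap = B.swap.compo A.swap h.symm := by
  refine ext' rfl rfl (fun v => rfl) (fun w => rfl)

end PartialIso

open PartialIso

instance partialIsoFinite [Fintype F] : Finite (PartialIso F n) := by
  have hS : Finite (Submodule F (Fin n → F)) :=
    Finite.of_injective (fun p => (p : Set (Fin n → F))) SetLike.coe_injective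
  let f : PartialIso F n → (Submodule F (Fin n → F)) × (Submodule F (Fin n → F)) ×
      ((Fin n → F) → (Fin n → F)) × ((Fin n → F) → (Fin n → F)) :=
    fun P => (P.V, P.W,
      fun x => if hx : x ∈ P.V then (P.g₁ ⟨x, hx⟩ : Fin n → F) else 0,
      fun x => if hx : x ∈ P.W then (P.g₂ ⟨x, hx⟩ : Fin n → F) else 0)
  have hf : Function.Injective f := by
    intro P Q h
    simp only [f, Prod.mk.injEq] at h
    obtain ⟨hV, hW, h1, h2⟩ := h
    refine PartialIso.ext' hV hW (fun v => ?_) (fun w => ?_)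
    · have := congrFun h1 v.1
      rw [dif_pos v.2, dif_pos (show v.1 ∈ Q.V from hV ▸ v.2)] at this
      exact this
    · have := congrFun h2 w.1
      rw [dif_pos w.2, dif_pos (show w.1 ∈ Q.W from hW ▸ w.2)] at this
      exact this
  exact Finite.of_injective f hf

end Aux

section Avg

open PartialIso

variable {F : Type*} [Field F] [Fintype F] {n : ℕ}

lemma mapDomain_avg (f : PartialIso F n → PartialIso F n)
    (p q : PartialIso F n → Prop)
    (hbij : Set.BijOn f {Q | q Q} {Q | p Q}) :
    Finsupp.mapDomain f
      ((Nat.card {Q : PartialIso F n // q Q} : ℂ)⁻¹ •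
        ∑ᶠ (Q : PartialIso F n) (_ : q Q), Finsupp.single Q (1 : ℂ)) =
    (Nat.card {Q : PartialIso F n // p Q} : ℂ)⁻¹ •
      ∑ᶠ (Q : PartialIso F n) (_ : p Q), Finsupp.single Q (1 : ℂ) := by
  have hcard : Nat.card {Q : PartialIso F n // q Q} = Nat.card {Q : PartialIso F n // p Q} :=
    Nat.card_congr (Set.BijOn.equiv f hbij)
  rw [Finsupp.mapDomain_smul, hcard]
  congr 1
  have h1 : Finsupp.mapDomain f (∑ᶠ (Q : PartialIso F n) (_ : q Q), Finsupp.single Q (1 : ℂ))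
      = ∑ᶠ Q ∈ {Q : PartialIso F n | q Q}, Finsupp.single (f Q) (1 : ℂ) := by
    show (Finsupp.mapDomain.addMonoidHom f)
        (∑ᶠ Q ∈ {Q : PartialIso F n | q Q}, Finsupp.single Q (1 : ℂ)) = _
    rw [AddMonoidHom.map_finsum_mem _ _ (Set.toFinite _)]
    refine finsum_mem_congr rfl fun Q _ => ?_
    exact Finsupp.mapDomain_single
  rw [h1]
  show ∑ᶠ Q ∈ {Q : PartialIso F n | q Q}, Finsupp.single (f Q) (1 : ℂ)
      = ∑ᶠ Q ∈ {Q : PartialIso F n | p Q}, Finsupp.single Q (1 : ℂ)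
  rw [← hbij.image_eq, finsum_mem_image hbij.injOn]

lemma actA_avgR (k l : (Fin n → F) ≃ₗ[F] (Fin n → F)) (P : PartialIso F n)
    (Wp : Submodule F (Fin n → F)) :
    actA k l (avgR P Wp) = avgR (P.act k l) (Wp.comap (l : (Fin n → F) →ₗ[F] (Fin n → F))) := by
  unfold actA avgR
  refine mapDomain_avg (PartialIso.act k l) _ _ ⟨?_, (act_injective k l).injOn, ?_⟩
  · rintro Q ⟨hTE, hW⟩
    exact ⟨isTrivialExt_act k l hTE, by rw [act_W, hW]⟩
  · rintro Q' ⟨hTE, hW⟩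
    refine ⟨Q'.act k.symm l.symm, ⟨?_, ?_⟩, act_rightInv k l Q'⟩
    · have := isTrivialExt_act k.symm l.symm hTE
      rwa [act_leftInv] at this
    · rw [act_W, hW, comap_comap_symm]

lemma actA_avgL (k l : (Fin n → F) ≃ₗ[F] (Fin n → F)) (Q : PartialIso F n)
    (Vp : Submodule F (Fin n → F)) :
    actA k l (avgL Q Vp) = avgL (Q.act k l) (Vp.comap (k : (Fin n → F) →ₗ[F] (Fin n → F))) := by
  unfold actA avgL
  refine mapDomain_avg (PartialIso.act k l) _ _ ⟨?_, (act_injective k l).injOn, ?_⟩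
  · rintro R ⟨hTE, hV⟩
    exact ⟨isTrivialExt_act k l hTE, by rw [act_V, hV]⟩
  · rintro R' ⟨hTE, hV⟩
    refine ⟨R'.act k.symm l.symm, ⟨?_, ?_⟩, act_rightInv k l R'⟩
    · have := isTrivialExt_act k.symm l.symm hTE
      rwa [act_leftInv] at this
    · rw [act_V, hV, comap_comap_symm]

lemma swap_avgL (Q : PartialIso F n) (Vp : Submodule F (Fin n → F)) :
    Finsupp.mapDomain PartialIso.swap (avgL Q Vp) = avgR Q.swap Vp := by
  unfold avgL avgR
  refine mapDomain_avg PartialIso.swap _ _ ⟨?_, swap_injective.injOn, ?_⟩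
  · rintro R ⟨hTE, hV⟩
    exact ⟨isTrivialExt_swap hTE, hV⟩
  · rintro R' ⟨hTE, hW⟩
    refine ⟨R'.swap, ⟨?_, hW⟩, swap_swap R'⟩
    have := isTrivialExt_swap hTE
    rwa [swap_swap] at this

lemma swap_avgR (P : PartialIso F n) (Wp : Submodule F (Fin n → F)) :
    Finsupp.mapDomain PartialIso.swap (avgR P Wp) = avgL P.swap Wp := by
  unfold avgL avgR
  refine mapDomain_avg PartialIso.swap _ _ ⟨?_, swap_injective.injOn, ?_⟩
  · rintro R ⟨hTE, hW⟩
    exact ⟨isTrivialExt_swap hTE, hW⟩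
  · rintro R' ⟨hTE, hV⟩
    refine ⟨R'.swap, ⟨?_, hV⟩, swap_swap R'⟩
    have := isTrivialExt_swap hTE
    rwa [swap_swap] at this

end Avg

section Mul

open PartialIso

variable {F : Type*} [Field F] [Fintype F] {n : ℕ}

lemma actA_pairTerm (k m l : (Fin n → F) ≃ₗ[F] (Fin n → F)) (A B : PartialIso F n) :
    Finsupp.mapDomain (PartialIso.act k l) (pairTerm A B) = pairTerm (A.act k m) (B.act m l) := by
  unfold pairTerm
  by_cases h : A.W = B.V
  · have h' : (A.act k m).W = (B.act m l).V := by
      rw [act_W, act_V, h]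
    rw [dif_pos h, dif_pos h', Finsupp.mapDomain_single, act_compo k m l A B h h']
  · have h' : ¬ (A.act k m).W = (B.act m l).V := by
      rw [act_W, act_V]
      exact fun hc => h ((comap_middle_iff m).mp hc)
    rw [dif_neg h, dif_neg h', Finsupp.mapDomain_zero]

lemma swap_pairTerm (A B : PartialIso F n) :
    Finsupp.mapDomain PartialIso.swap (pairTerm A B) = pairTerm B.swap A.swap := by
  unfold pairTerm
  by_cases h : A.W = B.V
  · have h' : B.swap.W = A.swap.V := h.symm
    rw [dif_pos h, dif_pos h', Finsupp.mapDomain_single, swap_compo A B h]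
  · have h' : ¬ B.swap.W = A.swap.V := fun hc => h hc.symm
    rw [dif_neg h, dif_neg h', Finsupp.mapDomain_zero]

lemma finsuppSum_comm {α β : Type*} (x : α →₀ ℂ) (y : β →₀ ℂ)
    (h : α → ℂ → β → ℂ → PIAlg F n) :
    (x.sum fun a ca => y.sum fun b cb => h a ca b cb)
      = y.sum fun b cb => x.sum fun a ca => h a ca b cb := by
  classical
  simp only [Finsupp.sum]
  exact Finset.sum_comm

lemma actA_mulBasis (k m l : (Fin n → F) ≃ₗ[F] (Fin n → F)) (P Q : PartialIso F n) :
    actA k l (mulBasis P Q) = mulBasis (P.act k m) (Q.act m l) := by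
  unfold mulBasis
  have hS : (P.act k m).W ⊔ (Q.act m l).V
      = (P.W ⊔ Q.V).comap (m : (Fin n → F) →ₗ[F] (Fin n → F)) := by
    rw [act_W, act_V, comap_sup_equiv]
  rw [hS, ← actA_avgR k m P (P.W ⊔ Q.V), ← actA_avgL m l Q (P.W ⊔ Q.V)]
  unfold actA
  rw [Finsupp.mapDomain_sum]
  rw [Finsupp.sum_mapDomain_index
    (fun A => by simp [Finsupp.sum])
    (fun A c₁ c₂ => by
      rw [← Finsupp.sum_add]
      refine Finsupp.sum_congr fun B _ => ?_
      rw [add_mul, add_smul])]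
  refine Finsupp.sum_congr fun A _ => ?_
  rw [Finsupp.mapDomain_sum]
  rw [Finsupp.sum_mapDomain_index
    (fun B => by simp)
    (fun B c₁ c₂ => by rw [mul_add, add_smul])]
  refine Finsupp.sum_congr fun B _ => ?_
  rw [Finsupp.mapDomain_smul, actA_pairTerm k m l]

lemma swap_mulBasis (P Q : PartialIso F n) :
    Finsupp.mapDomain PartialIso.swap (mulBasis P Q) = mulBasis Q.swap P.swap := by
  have hS : Q.swap.W ⊔ P.swap.V = P.W ⊔ Q.V := by
    rw [swap_W, swap_V, sup_comm]
  have hL : Finsupp.mapDomain PartialIso.swap (mulBasis P Q)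
      = (avgR P (P.W ⊔ Q.V)).sum fun A cA => (avgL Q (P.W ⊔ Q.V)).sum fun B cB =>
          (cA * cB) • pairTerm B.swap A.swap := by
    unfold mulBasis
    rw [Finsupp.mapDomain_sum]
    refine Finsupp.sum_congr fun A _ => ?_
    rw [Finsupp.mapDomain_sum]
    refine Finsupp.sum_congr fun B _ => ?_
    rw [Finsupp.mapDomain_smul, swap_pairTerm]
  have hR : mulBasis Q.swap P.swap
      = (avgL Q (P.W ⊔ Q.V)).sum fun B cB => (avgR P (P.W ⊔ Q.V)).sum fun A cA =>
          (cB * cA) • pairTerm B.swap A.swap := by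
    unfold mulBasis
    rw [hS, ← swap_avgL Q (P.W ⊔ Q.V), ← swap_avgR P (P.W ⊔ Q.V)]
    rw [Finsupp.sum_mapDomain_index
      (fun A => by simp [Finsupp.sum])
      (fun A c₁ c₂ => by
        rw [← Finsupp.sum_add]
        refine Finsupp.sum_congr fun B _ => ?_
        rw [add_mul, add_smul])]
    refine Finsupp.sum_congr fun B _ => ?_
    rw [Finsupp.sum_mapDomain_index
      (fun A => by simp)
      (fun A c₁ c₂ => by rw [mul_add, add_smul])]
  rw [hL, hR, finsuppSum_comm]
  refine Finsupp.sum_congr fun B _ => Finsupp.sum_congr fun A _ => by rw [mul_comm]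

lemma actA_piMul (k m l : (Fin n → F) ≃ₗ[F] (Fin n → F)) (x y : PIAlg F n) :
    actA k l (piMul x y) = piMul (actA k m x) (actA m l y) := by
  unfold piMul actA
  rw [Finsupp.mapDomain_sum]
  rw [Finsupp.sum_mapDomain_index
    (fun P => by simp [Finsupp.sum])
    (fun P c₁ c₂ => by
      rw [← Finsupp.sum_add]
      refine Finsupp.sum_congr fun Q _ => ?_
      rw [add_mul, add_smul])]
  refine Finsupp.sum_congr fun P _ => ?_
  rw [Finsupp.mapDomain_sum]
  rw [Finsupp.sum_mapDomain_index
    (fun Q => by simp)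
    (fun Q c₁ c₂ => by rw [mul_add, add_smul])]
  refine Finsupp.sum_congr fun Q _ => ?_
  rw [Finsupp.mapDomain_smul]
  exact congrArg _ (actA_mulBasis k m l P Q)

lemma swap_piMul (x y : PIAlg F n) :
    Finsupp.mapDomain PartialIso.swap (piMul x y)
      = piMul (Finsupp.mapDomain PartialIso.swap y) (Finsupp.mapDomain PartialIso.swap x) := by
  have hL : Finsupp.mapDomain PartialIso.swap (piMul x y)
      = x.sum fun P cP => y.sum fun Q cQ => (cP * cQ) • mulBasis Q.swap P.swap := by
    unfold piMul
    rw [Finsupp.mapDomain_sum]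
    refine Finsupp.sum_congr fun P _ => ?_
    rw [Finsupp.mapDomain_sum]
    refine Finsupp.sum_congr fun Q _ => ?_
    rw [Finsupp.mapDomain_smul, swap_mulBasis]
  have hR : piMul (Finsupp.mapDomain PartialIso.swap y) (Finsupp.mapDomain PartialIso.swap x)
      = y.sum fun Q cQ => x.sum fun P cP => (cQ * cP) • mulBasis Q.swap P.swap := by
    unfold piMul
    rw [Finsupp.sum_mapDomain_index
      (fun P => by simp [Finsupp.sum])
      (fun P c₁ c₂ => by
        rw [← Finsupp.sum_add]
        refine Finsupp.sum_congr fun Q _ => ?_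
        rw [add_mul, add_smul])]
    refine Finsupp.sum_congr fun Q _ => ?_
    rw [Finsupp.sum_mapDomain_index
      (fun P => by simp)
      (fun P c₁ c₂ => by rw [mul_add, add_smul])]
  rw [hL, hR, finsuppSum_comm]
  refine Finsupp.sum_congr fun Q _ => Finsupp.sum_congr fun P _ => by rw [mul_comm]

end Mul

/-- Extend a linear iso between submodules of a f.d. space to an automorphism. -/
lemma exists_extend_equiv {F : Type*} [Field F] [Fintype F] {n : ℕ}
    (V W : Submodule F (Fin n → F)) (e : W ≃ₗ[F] V) :
    ∃ k : (Fin n → F) ≃ₗ[F] (Fin n → F), ∀ w : W, k (w : Fin n → F) = (e w : Fin n → F) := by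
  obtain ⟨W', hW'⟩ := Submodule.exists_isCompl W
  obtain ⟨V', hV'⟩ := Submodule.exists_isCompl V
  have hdim : Module.finrank F W' = Module.finrank F V' := by
    have h1 := Submodule.finrank_add_eq_of_isCompl hW'
    have h2 := Submodule.finrank_add_eq_of_isCompl hV'
    have h3 : Module.finrank F W = Module.finrank F V := e.finrank_eq
    omega
  have e' : W' ≃ₗ[F] V' := LinearEquiv.ofFinrankEq W' V' hdim
  refine ⟨((Submodule.prodEquivOfIsCompl W W' hW').symm.trans (LinearEquiv.prodCongr e e')).trans
    (Submodule.prodEquivOfIsCompl V V' hV'), fun w => ?_⟩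
  simp only [LinearEquiv.trans_apply, Submodule.prodEquivOfIsCompl_symm_apply_left,
    Submodule.coe_prodEquivOfIsCompl']
  have : (LinearEquiv.prodCongr e e') ((w, 0) : ↥W × ↥W') = (e w, (e' : ↥W' →ₗ[F] ↥V') 0) := rfl
  rw [this, (e' : ↥W' →ₗ[F] ↥V').map_zero]
  simp

section Final

open PartialIso

variable {F : Type*} [Field F] [Fintype F] {n : ℕ}

lemma exists_act_eq_swap (P : PartialIso F n) :
    ∃ k l : (Fin n → F) ≃ₗ[F] (Fin n → F), P.act k l = P.swap := by
  obtain ⟨k, hk⟩ := exists_extend_equiv P.V P.W P.g₂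
  obtain ⟨l, hl⟩ := exists_extend_equiv P.W P.V P.g₁
  have hVW : P.V.comap (k : (Fin n → F) →ₗ[F] (Fin n → F)) = P.W := by
    have hle : P.W ≤ P.V.comap (k : (Fin n → F) →ₗ[F] (Fin n → F)) := by
      intro x hx
      show k x ∈ P.V
      rw [hk ⟨x, hx⟩]
      exact (P.g₂ ⟨x, hx⟩).2
    refine (Submodule.eq_of_le_of_finrank_eq hle ?_).symm
    rw [Submodule.comap_equiv_eq_map_symm, LinearEquiv.finrank_map_eq]
    exact P.g₂.finrank_eq
  have hWV : P.W.comap (l : (Fin n → F) →ₗ[F] (Fin n → F)) = P.V := by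
    have hle : P.V ≤ P.W.comap (l : (Fin n → F) →ₗ[F] (Fin n → F)) := by
      intro x hx
      show l x ∈ P.W
      rw [hl ⟨x, hx⟩]
      exact (P.g₁ ⟨x, hx⟩).2
    refine (Submodule.eq_of_le_of_finrank_eq hle ?_).symm
    rw [Submodule.comap_equiv_eq_map_symm, LinearEquiv.finrank_map_eq]
    exact P.g₁.finrank_eq
  refine ⟨k, l, ext' hVW hWV ?_ ?_⟩
  · intro v
    have hv : v.1 ∈ P.W := hVW ▸ v.2
    rw [act_g₁, LinearEquiv.symm_apply_eq]
    show (P.g₁ ⟨k v.1, v.2⟩ : Fin n → F) = l ((P.g₂ ⟨v.1, hv⟩ : Fin n → F))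
    rw [hl (P.g₂ ⟨v.1, hv⟩)]
    exact congr_coe P.g₁ (hk ⟨v.1, hv⟩)
  · intro w
    have hw : w.1 ∈ P.V := hWV ▸ w.2
    rw [act_g₂, LinearEquiv.symm_apply_eq]
    show (P.g₂ ⟨l w.1, w.2⟩ : Fin n → F) = k ((P.g₁ ⟨w.1, hw⟩ : Fin n → F))
    rw [hk (P.g₁ ⟨w.1, hw⟩)]
    exact congr_coe P.g₂ (hl ⟨w.1, hw⟩)

lemma coeff_act {x : PIAlg F n} (hx : x ∈ Zset F n)
    (k l : (Fin n → F) ≃ₗ[F] (Fin n → F)) (P : PartialIso F n) :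
    x (P.act k l) = x P := by
  calc x (P.act k l) = (actA k l x) (P.act k l) := by rw [hx k l]
    _ = x P := Finsupp.mapDomain_apply (act_injective k l) x P

lemma swap_fix {x : PIAlg F n} (hx : x ∈ Zset F n) :
    Finsupp.mapDomain PartialIso.swap x = x := by
  ext P
  have h1 : (Finsupp.mapDomain PartialIso.swap x) P = x P.swap := by
    conv_lhs => rw [show P = P.swap.swap from rfl]
    exact Finsupp.mapDomain_apply swap_injective x P.swap
  rw [h1]
  obtain ⟨k, l, hkl⟩ := exists_act_eq_swap P
  rw [← hkl, coeff_act hx]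

end Final

/-- The subspace `𝒵(n,F)` of `GL(n,F)`-biinvariant elements is closed under the product of
`𝒜(n,F)`, and it is commutative. -/
theorem statement14 {F : Type*} [Field F] [Fintype F] {n : ℕ} :
    ∀ x ∈ Zset F n, ∀ y ∈ Zset F n, piMul x y ∈ Zset F n ∧ piMul x y = piMul y x := by
  intro x hx y hy
  have hclosed : piMul x y ∈ Zset F n := by
    intro k l
    have h := actA_piMul k (LinearEquiv.refl F (Fin n → F)) l x y
    rwa [hx k (LinearEquiv.refl F (Fin n → F)), hy (LinearEquiv.refl F (Fin n → F)) l] at h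
  refine ⟨hclosed, ?_⟩
  calc piMul x y = Finsupp.mapDomain PartialIso.swap (piMul x y) := (swap_fix hclosed).symm
    _ = piMul (Finsupp.mapDomain PartialIso.swap y) (Finsupp.mapDomain PartialIso.swap x) :=
        swap_piMul x y
    _ = piMul y x := by rw [swap_fix hy, swap_fix hx]
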